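/- Let S be a strictly causal operator mapping ℝ^{d_u}-valued signals to ℝ^{d_y}-valued signals and K a causal operator mapping ℝ^{d_y}-valued signals to ℝ^{d_u}-valued signals. Then: (i) the composition K∘S is strictly causal; (ii) the operator I − K∘S (on ℝ^{d_u}-valued signals, I the identity) admits a unique two-sided inverse (I − K∘S)^{-1}, which is causal; and (iii) the operator Ŝ := S ∘ (I − K∘S)^{-1} is strictly causal. -/
import Mathlib


/-- A signal in `ℝ^d` is a function `ℕ → ℝ^d`. -/
abbrev Signal (d : ℕ) := ℕ → EuclideanSpace ℝ (Fin d)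

/-- An operator is causal if its output at time `t` depends only on inputs up to time `t`. -/
def Causal {d₁ d₂ : ℕ} (Υ : Signal d₁ → Signal d₂) : Prop :=
  ∀ (x z : Signal d₁) (t : ℕ), (∀ s ≤ t, x s = z s) → Υ x t = Υ z t

/-- An operator is strictly causal if its output at time `t` depends only on inputs
up to time `t - 1`. -/
def StrictlyCausal {d₁ d₂ : ℕ} (Υ : Signal d₁ → Signal d₂) : Prop :=
  ∀ (x z : Signal d₁) (t : ℕ), (∀ s < t, x s = z s) → Υ x t = Υ z t

/-- Auxiliary fixed-point construction: solution of `u t = a t + F u t` by strong recursion. -/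
noncomputable def psiAux {d : ℕ} (F : Signal d → Signal d) (a : Signal d) :
    ℕ → EuclideanSpace ℝ (Fin d)
  | t => a t + F (fun s => if h : s < t then psiAux F a s else 0) t

lemma psiAux_fixed {d : ℕ} {F : Signal d → Signal d} (hF : StrictlyCausal F)
    (a : Signal d) (t : ℕ) : psiAux F a t = a t + F (psiAux F a) t := by
  rw [psiAux]
  congr 1
  exact hF _ _ t fun s hs => by simp [hs]

lemma fixed_unique {d : ℕ} {F : Signal d → Signal d} (hF : StrictlyCausal F)
    {u v a : Signal d} (hu : ∀ t, u t = a t + F u t) (hv : ∀ t, v t = a t + F v t) :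
    u = v := by
  funext t
  induction t using Nat.strong_induction_on with
  | _ t ih =>
    rw [hu, hv]
    congr 1
    exact hF _ _ t fun s hs => ih s hs

/-- For strictly causal `S` and causal `K`: (i) `K ∘ S` is strictly causal; (ii) the operator
`I − K∘S` admits a unique two-sided inverse, which is causal; (iii) `Ŝ := S ∘ (I − K∘S)⁻¹`
is strictly causal. -/
theorem kComp_inverse_strictlyCausal {du dy : ℕ}
    (S : Signal du → Signal dy) (K : Signal dy → Signal du)
    (hS : StrictlyCausal S) (hK : Causal K) :
    StrictlyCausal (fun u : Signal du => K (S u)) ∧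
    ∃ Ψ : Signal du → Signal du,
      (∀ a : Signal du, Ψ a - K (S (Ψ a)) = a) ∧
      (∀ b : Signal du, Ψ (b - K (S b)) = b) ∧
      (∀ Ψ' : Signal du → Signal du,
        ((∀ a, Ψ' a - K (S (Ψ' a)) = a) ∧ (∀ b, Ψ' (b - K (S b)) = b)) → Ψ' = Ψ) ∧
      Causal Ψ ∧
      StrictlyCausal (fun u : Signal du => S (Ψ u)) := by
  set F : Signal du → Signal du := fun u => K (S u) with hFdef
  have hF : StrictlyCausal F := by
    intro x z t hxz
    exact hK _ _ t fun s hs => hS _ _ s fun r hr => hxz r (lt_of_lt_of_le hr hs)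
  refine ⟨hF, ?_⟩
  set Ψ : Signal du → Signal du := fun a => psiAux F a with hΨdef
  have hfix : ∀ a t, Ψ a t = a t + F (Ψ a) t := fun a t => psiAux_fixed hF a t
  have hleft : ∀ a : Signal du, Ψ a - F (Ψ a) = a := by
    intro a
    funext t
    have := hfix a t
    simp only [Pi.sub_apply]
    rw [this]; abel
  have hright : ∀ b : Signal du, Ψ (b - F b) = b := by
    intro b
    have h1 : ∀ t, Ψ (b - F b) t = (b - F b) t + F (Ψ (b - F b)) t := hfix _
    have h2 : ∀ t, b t = (b - F b) t + F b t := by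
      intro t; simp only [Pi.sub_apply]; abel
    exact fixed_unique hF h1 h2
  refine ⟨Ψ, hleft, hright, ?_, ?_, ?_⟩
  · intro Ψ' ⟨hl, _⟩
    funext a
    have h1 : ∀ t, Ψ' a t = a t + F (Ψ' a) t := by
      intro t
      have := congrFun (hl a) t
      simp only [Pi.sub_apply] at this
      rw [← this]; abel
    exact fixed_unique hF h1 (hfix a)
  · -- Causal Ψ
    intro x z t hxz
    induction t using Nat.strong_induction_on with
    | _ t ih =>
      rw [hfix x t, hfix z t, hxz t le_rfl]
      congr 1
      exact hF _ _ t fun s hs => ih s hs fun r hr => hxz r (le_trans hr (le_of_lt hs))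
  · -- StrictlyCausal S ∘ Ψ
    intro x z t hxz
    have hΨeq : ∀ s < t, Ψ x s = Ψ z s := by
      intro s hs
      induction s using Nat.strong_induction_on with
      | _ s ih =>
        rw [hfix x s, hfix z s, hxz s hs]
        congr 1
        exact hF _ _ s fun r hr => ih r hr (lt_trans hr hs)
    exact hS _ _ t hΨeq
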